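/- Let λ > 0, 0 < p ≤ 1 and let d ≥ 1 be an integer. Let E = ∑_{n=0}^∞ (d/(d+1))^n ∫₀^∞ e^{-t} ( ∑_{k=max(n,1)}^∞ e^{-λt}(1-e^{-λt})^{k-1} C(k,n) p^n (1-p)^{k-n} ) dt, i.e. E = E[(d/(d+1))^N] for the Yule growth with binomial catastrophe survivor distribution. Then E ≥ d/(d+1) if and only if ∑_{k=0}^∞ k! ((d+1-p)/(d+1))^k / ((2+1/λ)_k) ≥ d(λ+1)/(d+1-p). -/

import Mathlib

open MeasureTheory Real Set

private lemma aux_bound {l : ℝ} (hl : 0 < l) (j : ℕ) {t : ℝ} (ht : t ∈ Ioi (0:ℝ)) :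
    ‖exp (-t) * (exp (-(l*t)) * (1 - exp (-(l*t)))^j)‖ ≤ ‖exp (-1 * t)‖ ∧
    ‖exp (-t) * (1 - exp (-(l*t)))^j‖ ≤ ‖exp (-1 * t)‖ := by
  have h1 : 0 < l * t := mul_pos hl ht
  have h2 : exp (-(l*t)) ≤ 1 := exp_le_one_iff.mpr (by linarith)
  have h3 : 0 < exp (-(l*t)) := exp_pos _
  have h4 : |1 - exp (-(l*t))| ≤ 1 := by rw [abs_le]; constructor <;> linarith
  have h5 : |1 - exp (-(l*t))|^j ≤ 1 := pow_le_one₀ (abs_nonneg _) h4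
  have h6 : (0:ℝ) ≤ |1 - exp (-(l*t))|^j := pow_nonneg (abs_nonneg _) j
  have key : ∀ c : ℝ, 0 ≤ c → c ≤ 1 → ‖exp (-t) * c‖ ≤ ‖exp (-1 * t)‖ := by
    intro c h0 h1
    rw [Real.norm_eq_abs, Real.norm_eq_abs, abs_mul, abs_exp, neg_one_mul, abs_exp,
      abs_of_nonneg h0]
    nlinarith [exp_pos (-t)]
  constructor
  · have : |exp (-(l*t)) * (1 - exp (-(l*t)))^j| ≤ 1 := by
      rw [abs_mul, abs_exp, abs_pow]
      nlinarith
    have h' := key _ (abs_nonneg _) this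
    simp only [Real.norm_eq_abs, abs_abs, abs_mul] at h' ⊢
    exact h'
  · have : |(1 - exp (-(l*t)))^j| ≤ 1 := by rw [abs_pow]; exact h5
    have h' := key _ (abs_nonneg _) this
    simp only [Real.norm_eq_abs, abs_abs, abs_mul] at h' ⊢
    exact h'

private lemma integrableJ {l : ℝ} (hl : 0 < l) (j : ℕ) :
    IntegrableOn (fun t : ℝ => exp (-t) * (1 - exp (-(l*t)))^j) (Ioi 0) := by
  refine Integrable.mono (exp_neg_integrableOn_Ioi 0 one_pos)
    ((by fun_prop : Continuous (fun t : ℝ => exp (-t) * (1 - exp (-(l*t)))^j)).aestronglyMeasurable) ?_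
  filter_upwards [ae_restrict_mem measurableSet_Ioi] with t ht
  exact (aux_bound hl j ht).2

private lemma integrableI {l : ℝ} (hl : 0 < l) (j : ℕ) :
    IntegrableOn (fun t : ℝ => exp (-t) * (exp (-(l*t)) * (1 - exp (-(l*t)))^j)) (Ioi 0) := by
  refine Integrable.mono (exp_neg_integrableOn_Ioi 0 one_pos)
    ((by fun_prop : Continuous (fun t : ℝ => exp (-t) * (exp (-(l*t)) * (1 - exp (-(l*t)))^j))).aestronglyMeasurable) ?_
  filter_upwards [ae_restrict_mem measurableSet_Ioi] with t ht
  exact (aux_bound hl j ht).1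

private lemma relJI {l : ℝ} (hl : 0 < l) (j : ℕ) :
    (∫ t in Ioi (0:ℝ), exp (-t) * (1 - exp (-(l*t)))^(j+1)) =
      ((j:ℝ)+1) * l * ∫ t in Ioi (0:ℝ), exp (-t) * (exp (-(l*t)) * (1 - exp (-(l*t)))^j) := by
  have hderiv : ∀ t ∈ Ici (0:ℝ),
      HasDerivAt (fun t : ℝ => exp (-t) * (1 - exp (-(l*t)))^(j+1))
      (-(exp (-t) * (1 - exp (-(l*t)))^(j+1)) +
        ((j:ℝ)+1) * l * (exp (-t) * (exp (-(l*t)) * (1 - exp (-(l*t)))^j))) t := by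
    intro t _
    have h1 : HasDerivAt (fun t : ℝ => exp (-t)) (-exp (-t)) t := by
      simpa using ((hasDerivAt_id t).neg.exp)
    have h2 : HasDerivAt (fun t : ℝ => 1 - exp (-(l*t))) (l * exp (-(l*t))) t := by
      have : HasDerivAt (fun t : ℝ => exp (-(l*t))) (-l * exp (-(l*t))) t := by
        have := ((hasDerivAt_id t).const_mul l).neg.exp
        simpa [mul_comm] using this
      simpa using (this.const_sub 1)
    have := h1.mul (h2.pow (j+1))
    refine this.congr_deriv ?_
    simp only [Pi.pow_apply, Nat.add_sub_cancel]
    push_cast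
    ring
  have htend : Filter.Tendsto (fun t : ℝ => exp (-t) * (1 - exp (-(l*t)))^(j+1))
      Filter.atTop (nhds 0) := by
    have h1 : Filter.Tendsto (fun t : ℝ => exp (-t)) Filter.atTop (nhds (0:ℝ)) := by
      simpa using Real.tendsto_exp_neg_atTop_nhds_zero
    have hm : Filter.Tendsto (fun t : ℝ => l * t) Filter.atTop Filter.atTop :=
      Filter.Tendsto.const_mul_atTop hl Filter.tendsto_id
    have h2 : Filter.Tendsto (fun t : ℝ => exp (-(l*t))) Filter.atTop (nhds (0:ℝ)) := by
      simpa [Function.comp_def] using Real.tendsto_exp_neg_atTop_nhds_zero.comp hm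
    have h3 : Filter.Tendsto (fun t : ℝ => (1 - exp (-(l*t)))^(j+1))
        Filter.atTop (nhds (1:ℝ)) := by
      have := ((tendsto_const_nhds (x := (1:ℝ))).sub h2).pow (j+1)
      simpa using this
    have := h1.mul h3
    simpa using this
  have e1 : IntegrableOn (fun t : ℝ => -(exp (-t) * (1 - exp (-(l*t)))^(j+1))) (Ioi 0) :=
    (integrableJ hl (j+1)).neg
  have e2 : IntegrableOn (fun t : ℝ =>
      ((j:ℝ)+1) * l * (exp (-t) * (exp (-(l*t)) * (1 - exp (-(l*t)))^j))) (Ioi 0) :=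
    (integrableI hl j).const_mul _
  have hint : IntegrableOn (fun t : ℝ =>
      (-(exp (-t) * (1 - exp (-(l*t)))^(j+1)) +
        ((j:ℝ)+1) * l * (exp (-t) * (exp (-(l*t)) * (1 - exp (-(l*t)))^j)))) (Ioi 0) :=
    e1.add e2
  have key := integral_Ioi_of_hasDerivAt_of_tendsto' hderiv hint htend
  rw [integral_add e1 e2, integral_neg, integral_const_mul] at key
  have h0 : rexp (-0) * (1 - rexp (-(l * 0))) ^ (j+1) = 0 := by simp
  rw [h0] at key
  linarith [key]

private lemma poch_pos {l : ℝ} (hl : 0 < l) (j : ℕ) :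
    0 < (ascPochhammer ℝ j).eval (2 + 1/l) := by
  induction j with
  | zero => simp
  | succ n ih =>
    rw [ascPochhammer_succ_eval]
    have : 0 < 1/l := by positivity
    have : (0:ℝ) < 2 + 1/l + n := by positivity
    positivity

private lemma J_eq_I {l : ℝ} (hl : 0 < l) (j : ℕ) :
    (∫ t in Ioi (0:ℝ), exp (-t) * (1 - exp (-(l*t)))^j) =
      (1 + ((j:ℝ)+1) * l) * ∫ t in Ioi (0:ℝ), exp (-t) * (exp (-(l*t)) * (1 - exp (-(l*t)))^j) := by
  have rel2 : (∫ t in Ioi (0:ℝ), exp (-t) * (1 - exp (-(l*t)))^(j+1)) =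
      (∫ t in Ioi (0:ℝ), exp (-t) * (1 - exp (-(l*t)))^j) -
        ∫ t in Ioi (0:ℝ), exp (-t) * (exp (-(l*t)) * (1 - exp (-(l*t)))^j) := by
    rw [← integral_sub (integrableJ hl j) (integrableI hl j)]
    refine setIntegral_congr_fun measurableSet_Ioi (fun t _ => ?_)
    ring
  have rel1 := relJI hl j
  rw [rel1] at rel2
  linarith [rel2]

private lemma I_val {l : ℝ} (hl : 0 < l) (j : ℕ) :
    (∫ t in Ioi (0:ℝ), exp (-t) * (exp (-(l*t)) * (1 - exp (-(l*t)))^j)) =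
      (j.factorial : ℝ) / ((l + 1) * (ascPochhammer ℝ j).eval (2 + 1/l)) := by
  induction j with
  | zero =>
    have hJ0 : (∫ t in Ioi (0:ℝ), exp (-t) * (1 - exp (-(l*t)))^0) = 1 := by
      simp only [pow_zero, mul_one]; exact integral_exp_neg_Ioi_zero
    have := J_eq_I hl 0
    rw [hJ0] at this
    have hne : (1 + (0+1) * l) ≠ 0 := by norm_num; linarith
    simp only [Nat.cast_zero] at this
    rw [ascPochhammer_zero]
    simp only [Nat.factorial_zero, Nat.cast_one, Polynomial.eval_one, mul_one]
    rw [eq_div_iff (by linarith)]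
    nlinarith [this]
  | succ n ih =>
    have r1 := relJI hl n
    have r2 := J_eq_I hl (n+1)
    rw [r1, ih] at r2
    have hP := poch_pos hl n
    have hPne : (ascPochhammer ℝ n).eval (2 + 1/l) ≠ 0 := ne_of_gt hP
    have hl1 : l + 1 ≠ 0 := by linarith
    have hden : (1 + ((n:ℝ)+1+1) * l) ≠ 0 := by positivity
    have hlne : l ≠ 0 := ne_of_gt hl
    rw [ascPochhammer_succ_eval]
    have : (∫ t in Ioi (0:ℝ), exp (-t) * (exp (-(l*t)) * (1 - exp (-(l*t)))^(n+1))) =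
        ((n:ℝ)+1) * l * ((n.factorial : ℝ) / ((l + 1) * (ascPochhammer ℝ n).eval (2 + 1/l))) /
          (1 + ((n:ℝ)+1+1) * l) := by
      rw [eq_div_iff hden]
      push_cast at r2 ⊢
      linarith [r2]
    rw [this, Nat.factorial_succ]
    push_cast
    field_simp
    ring

private lemma intC {l x : ℝ} (hl : 0 < l) (hx0 : 0 < x) (hx1 : x < 1) :
    (∫ t in Ioi (0:ℝ), exp (-t) * (exp (-(l*t)) * x / (1 - (1 - exp (-(l*t))) * x))) =
      (x/(l+1)) * ∑' j : ℕ, (j.factorial : ℝ) * x^j /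
        (ascPochhammer ℝ j).eval (2 + 1/l) := by
  set f : ℕ → ℝ → ℝ := fun j t => x^(j+1) * (exp (-t) * (exp (-(l*t)) * (1 - exp (-(l*t)))^j))
    with hf_def
  have haq : ∀ t : ℝ, t ∈ Ioi (0:ℝ) → 0 ≤ (1 - exp (-(l*t))) ∧ (1 - exp (-(l*t))) * x < 1 := by
    intro t ht
    have h1 : 0 < l * t := mul_pos hl ht
    have h2 : exp (-(l*t)) ≤ 1 := exp_le_one_iff.mpr (by linarith)
    have h3 : 0 < exp (-(l*t)) := exp_pos _
    constructor
    · linarith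
    · nlinarith
  have hptwise : ∀ t : ℝ, t ∈ Ioi (0:ℝ) → HasSum (fun j => f j t)
      (exp (-t) * (exp (-(l*t)) * x / (1 - (1 - exp (-(l*t))) * x))) := by
    intro t ht
    obtain ⟨hq0, hq1⟩ := haq t ht
    have hqx0 : 0 ≤ (1 - exp (-(l*t))) * x := mul_nonneg hq0 hx0.le
    have hgeo := (hasSum_geometric_of_lt_one hqx0 hq1).mul_left
      (exp (-t) * (exp (-(l*t)) * x))
    have heq : (fun j => exp (-t) * (exp (-(l*t)) * x) * ((1 - exp (-(l*t))) * x)^j)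
        = fun j => f j t := by
      funext j
      rw [hf_def]
      rw [mul_pow]
      ring
    rw [heq] at hgeo
    rw [show exp (-t) * (exp (-(l*t)) * x / (1 - (1 - exp (-(l*t))) * x)) = exp (-t) * (exp (-(l*t)) * x) * (1 - (1 - exp (-(l*t))) * x)⁻¹ by rw [div_eq_mul_inv]; ring]
    exact hgeo
  have hintf : ∀ j, IntegrableOn (f j) (Ioi 0) := fun j => (integrableI hl j).const_mul _
  have hnonneg : ∀ j, ∀ t ∈ Ioi (0:ℝ), 0 ≤ f j t := by
    intro j t ht
    obtain ⟨hq0, _⟩ := haq t ht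
    have := exp_pos (-t); have := exp_pos (-(l*t))
    have : (0:ℝ) ≤ (1 - exp (-(l*t)))^j := pow_nonneg hq0 j
    rw [hf_def]
    positivity
  have hbound : ∀ j, (∫ t in Ioi (0:ℝ), f j t) ≤ x^(j+1) := by
    intro j
    have : (∫ t in Ioi (0:ℝ), f j t) ≤ ∫ t in Ioi (0:ℝ), x^(j+1) * exp (-t) := by
      have hint2 : IntegrableOn (fun t : ℝ => x^(j+1) * exp (-t)) (Ioi 0) := by
        simpa [neg_one_mul, IntegrableOn] using (exp_neg_integrableOn_Ioi 0 one_pos).const_mul (x^(j+1))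
      refine setIntegral_mono_on (hintf j) hint2 measurableSet_Ioi ?_
      intro t ht
      obtain ⟨hq0, _⟩ := haq t ht
      have h1 : 0 < l * t := mul_pos hl ht
      have h2 : exp (-(l*t)) ≤ 1 := exp_le_one_iff.mpr (by linarith)
      have h4 : (1 - exp (-(l*t)))^j ≤ 1 := pow_le_one₀ hq0 (by have := exp_pos (-(l*t)); linarith)
      have h5 : (0:ℝ) ≤ (1 - exp (-(l*t)))^j := pow_nonneg hq0 j
      have hxp : (0:ℝ) ≤ x^(j+1) := pow_nonneg hx0.le _
      have he : (0:ℝ) < exp (-t) := exp_pos _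
      have h3 : (0:ℝ) < exp (-(l*t)) := exp_pos _
      have hmul : exp (-t) * (exp (-(l*t)) * (1 - exp (-(l*t)))^j) ≤ exp (-t) := by nlinarith [mul_le_one₀ h2 h5 h4]
      rw [hf_def]
      exact mul_le_mul_of_nonneg_left hmul hxp
    calc (∫ t in Ioi (0:ℝ), f j t) ≤ ∫ t in Ioi (0:ℝ), x^(j+1) * exp (-t) := this
      _ = x^(j+1) := by rw [integral_const_mul, integral_exp_neg_Ioi_zero, mul_one]
  have hlint : ∀ j, (∫⁻ t in Ioi (0:ℝ), ‖f j t‖₊) = ENNReal.ofReal (∫ t in Ioi (0:ℝ), f j t) := by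
    intro j
    rw [MeasureTheory.ofReal_integral_eq_lintegral_ofReal (hintf j)
      ((ae_restrict_mem measurableSet_Ioi).mono (fun t ht => hnonneg j t ht))]
    refine lintegral_congr_ae ?_
    filter_upwards [ae_restrict_mem measurableSet_Ioi] with t ht
    rw [← enorm_eq_nnnorm, ← ofReal_norm, Real.norm_eq_abs, abs_of_nonneg (hnonneg j t ht)]
  have hsummx : Summable (fun j : ℕ => x^(j+1)) := by
    refine Summable.congr ((summable_geometric_of_lt_one hx0.le hx1).mul_left x) (fun j => ?_)
    rw [← pow_succ']
  have hfin : (∑' j : ℕ, ∫⁻ t in Ioi (0:ℝ), ‖f j t‖₊) ≠ ⊤ := by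
    have : (∑' j : ℕ, ∫⁻ t in Ioi (0:ℝ), ‖f j t‖₊) ≤ ∑' j : ℕ, ENNReal.ofReal (x^(j+1)) := by
      refine ENNReal.tsum_le_tsum (fun j => ?_)
      rw [hlint j]
      exact ENNReal.ofReal_le_ofReal (hbound j)
    refine ne_top_of_le_ne_top ?_ this
    rw [← ENNReal.ofReal_tsum_of_nonneg (fun j => pow_nonneg hx0.le _) hsummx]
    exact ENNReal.ofReal_ne_top
  have hswap := MeasureTheory.integral_tsum
    (fun j => ((by fun_prop : Continuous (f j))).aestronglyMeasurable) hfin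
  have hleft : (∫ t in Ioi (0:ℝ), exp (-t) * (exp (-(l*t)) * x / (1 - (1 - exp (-(l*t))) * x)))
      = ∫ t in Ioi (0:ℝ), ∑' j : ℕ, f j t := by
    refine setIntegral_congr_fun measurableSet_Ioi (fun t ht => ?_)
    exact ((hptwise t ht).tsum_eq).symm
  rw [hleft, hswap]
  have : ∀ j : ℕ, (∫ t in Ioi (0:ℝ), f j t) =
      (x/(l+1)) * ((j.factorial : ℝ) * x^j / (ascPochhammer ℝ j).eval (2 + 1/l)) := by
    intro j
    rw [hf_def]
    simp only []
    rw [MeasureTheory.integral_const_mul, I_val hl j]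
    have hP := poch_pos hl j
    field_simp
    ring
  rw [tsum_congr this, tsum_mul_left]

private lemma pointA {p s a : ℝ} (hp0 : 0 < p) (hp1 : p ≤ 1) (hs0 : 0 < s) (hs1 : s < 1)
    (ha0 : 0 < a) (ha1 : a ≤ 1) :
    Summable (Function.uncurry (fun k n : ℕ => s^n *
      (if max n 1 ≤ k then a * (1-a)^(k-1) * (k.choose n : ℝ) * p^n * (1-p)^(k-n) else 0))) ∧
    (∑' n : ℕ, ∑' k : ℕ, s^n *
      (if max n 1 ≤ k then a * (1-a)^(k-1) * (k.choose n : ℝ) * p^n * (1-p)^(k-n) else 0))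
      = a * (1-p+p*s) / (1 - (1-a) * (1-p+p*s)) := by
  set x : ℝ := 1 - p + p*s with hx_def
  have hx0 : 0 < x := by nlinarith
  have hx1 : x < 1 := by nlinarith
  set F : ℕ → ℕ → ℝ := fun k n => s^n *
      (if max n 1 ≤ k then a * (1-a)^(k-1) * (k.choose n : ℝ) * p^n * (1-p)^(k-n) else 0)
    with hF_def
  have hq0 : (0:ℝ) ≤ 1 - a := by linarith
  have hq1 : 1 - a < 1 := by linarith
  have hnn : ∀ k n, 0 ≤ F k n := by
    intro k n
    rw [hF_def]
    dsimp only
    split_ifs with h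
    · have h1 : (0:ℝ) ≤ (1-a)^(k-1) := pow_nonneg hq0 _
      have h2 : (0:ℝ) ≤ (1-p)^(k-n) := pow_nonneg (by linarith) _
      positivity
    · positivity
  have hzero : ∀ k : ℕ, ∀ n ∉ Finset.range (k+1), F k n = 0 := by
    intro k n hn
    rw [Finset.mem_range, not_lt] at hn
    have : ¬ (max n 1 ≤ k) := by
      intro h
      have := le_trans (le_max_left n 1) h
      omega
    rw [hF_def]
    simp [this]
  have hrow_summable : ∀ k, Summable (fun n => F k n) :=
    fun k => summable_of_ne_finset_zero (fun n hn => hzero k n hn)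
  have hrow_tsum : ∀ k, ∑' n, F k n = if 1 ≤ k then a * (1-a)^(k-1) * x^k else 0 := by
    intro k
    rw [tsum_eq_sum (hzero k)]
    rcases Nat.eq_zero_or_pos k with hk | hk
    · subst hk
      simp [hF_def]
    · rw [if_pos (show 1 ≤ k by omega)]
      have hits : ∀ n ∈ Finset.range (k+1), F k n =
          a * (1-a)^(k-1) * ((p*s)^n * (1-p)^(k-n) * (k.choose n : ℝ)) := by
        intro n hn
        rw [Finset.mem_range] at hn
        have hcond : max n 1 ≤ k := by omega
        rw [hF_def]
        simp only [if_pos hcond]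
        rw [mul_pow]
        ring
      rw [Finset.sum_congr rfl hits, ← Finset.mul_sum, ← add_pow]
      have : p * s + (1-p) = x := by rw [hx_def]; ring
      rw [this]
  have hGsucc : ∀ j : ℕ, (if 1 ≤ j+1 then a * (1-a)^(j+1-1) * x^(j+1) else 0)
      = (a*x) * ((1-a)*x)^j := by
    intro j
    rw [if_pos (by omega)]
    simp only [Nat.add_sub_cancel]
    rw [mul_pow]
    ring
  have hqx0 : 0 ≤ (1-a)*x := mul_nonneg hq0 hx0.le
  have hqx1 : (1-a)*x < 1 := by nlinarith
  have hGsummable : Summable (fun k => if 1 ≤ k then a * (1-a)^(k-1) * x^k else 0) := by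
    rw [← summable_nat_add_iff 1]
    refine Summable.congr (((summable_geometric_of_lt_one hqx0 hqx1).mul_left (a*x))) ?_
    intro j
    exact (hGsucc j).symm
  have hGsum : (∑' k : ℕ, if 1 ≤ k then a * (1-a)^(k-1) * x^k else 0)
      = a * x / (1 - (1-a)*x) := by
    rw [Summable.tsum_eq_zero_add hGsummable]
    simp only [if_neg (by omega : ¬ (1:ℕ) ≤ 0)]
    rw [tsum_congr hGsucc, tsum_mul_left, tsum_geometric_of_lt_one hqx0 hqx1]
    rw [div_eq_mul_inv]
    ring
  have hsum_prod : Summable (Function.uncurry F) := by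
    have : Summable (fun q : ℕ × ℕ => F q.1 q.2) := by
      rw [summable_prod_of_nonneg (fun q => hnn q.1 q.2)]
      exact ⟨hrow_summable, Summable.congr hGsummable (fun k => (hrow_tsum k).symm)⟩
    exact this
  refine ⟨hsum_prod, ?_⟩
  rw [Summable.tsum_comm hsum_prod, tsum_congr hrow_tsum, hGsum]

private noncomputable def trm (l p : ℝ) (n k : ℕ) (t : ℝ) : ℝ :=
  if max n 1 ≤ k then
    exp (-(l * t)) * (1 - exp (-(l * t))) ^ (k - 1) * (k.choose n : ℝ) * p ^ n * (1 - p) ^ (k - n)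
  else 0

private lemma trm_meas (l p : ℝ) (n k : ℕ) : Measurable (fun t => trm l p n k t) := by
  unfold trm
  by_cases h : max n 1 ≤ k
  · simp only [if_pos h]
    fun_prop
  · simp only [if_neg h]
    exact measurable_const

private lemma trm_nonneg {l p : ℝ} (hp0 : 0 < p) (hp1 : p ≤ 1) (n k : ℕ) {t : ℝ} (ht : 0 < l * t) :
    0 ≤ trm l p n k t := by
  unfold trm
  split_ifs with h
  · have h2 : exp (-(l*t)) ≤ 1 := exp_le_one_iff.mpr (by linarith)
    have h1 : (0:ℝ) ≤ (1 - exp (-(l*t)))^(k-1) := pow_nonneg (by linarith) _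
    have h3 : (0:ℝ) ≤ (1-p)^(k-n) := pow_nonneg (by linarith) _
    exact mul_nonneg (mul_nonneg (mul_nonneg (mul_nonneg (exp_pos _).le h1)
      (Nat.cast_nonneg _)) (pow_nonneg hp0.le n)) h3
  · exact le_refl _
private lemma mainEq {l p s : ℝ} (hl : 0 < l) (hp0 : 0 < p) (hp1 : p ≤ 1)
    (hs0 : 0 < s) (hs1 : s < 1) :
    (∑' n : ℕ, s ^ n * ∫ t in Ioi (0:ℝ), exp (-t) *
        ∑' k : ℕ, (if max n 1 ≤ k then
          exp (-(l * t)) * (1 - exp (-(l * t))) ^ (k - 1) *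
            (k.choose n : ℝ) * p ^ n * (1 - p) ^ (k - n)
          else 0))
      = ((1-p+p*s)/(l+1)) * ∑' j : ℕ, (j.factorial : ℝ) * (1-p+p*s)^j /
          (ascPochhammer ℝ j).eval (2 + 1/l) := by
  have hx0 : 0 < 1 - p + p*s := by nlinarith
  have hx1 : 1 - p + p*s < 1 := by nlinarith
  -- rewrite goal in terms of trm
  have hgoal : (∑' n : ℕ, s ^ n * ∫ t in Ioi (0:ℝ), exp (-t) *
        ∑' k : ℕ, (if max n 1 ≤ k then
          exp (-(l * t)) * (1 - exp (-(l * t))) ^ (k - 1) *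
            (k.choose n : ℝ) * p ^ n * (1 - p) ^ (k - n)
          else 0))
      = ∑' n : ℕ, s ^ n * ∫ t in Ioi (0:ℝ), exp (-t) * ∑' k : ℕ, trm l p n k t := rfl
  rw [hgoal]
  -- basic facts for t > 0
  have hapos : ∀ t : ℝ, 0 < exp (-(l*t)) := fun t => exp_pos _
  have hale : ∀ t ∈ Ioi (0:ℝ), exp (-(l*t)) ≤ 1 := by
    intro t ht
    have : 0 < l * t := mul_pos hl ht
    exact exp_le_one_iff.mpr (by linarith)
  have hPA : ∀ t ∈ Ioi (0:ℝ),
      Summable (Function.uncurry (fun k n : ℕ => s^n * trm l p n k t)) ∧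
      (∑' n : ℕ, ∑' k : ℕ, s^n * trm l p n k t)
        = exp (-(l*t)) * (1-p+p*s) / (1 - (1-exp (-(l*t))) * (1-p+p*s)) :=
    fun t ht => pointA hp0 hp1 hs0 hs1 (hapos t) (hale t ht)
  -- summability of trm in k, for t > 0
  have hSk : ∀ n : ℕ, ∀ t ∈ Ioi (0:ℝ), Summable (fun k => trm l p n k t) := by
    intro n t ht
    have h1 : Summable (fun k => s^n * trm l p n k t) :=
      ((hPA t ht).1.prod_symm.prod_factor n)
    exact (summable_mul_left_iff (by positivity : s^n ≠ 0)).mp h1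
  -- measurable version of the inner sum
  set Gm : ℕ → ℝ → ℝ := fun n t => (∑' k : ℕ, ENNReal.ofReal (trm l p n k t)).toReal
    with hGm_def
  have hGm_meas : ∀ n, Measurable (Gm n) := by
    intro n
    exact (Measurable.ennreal_tsum (fun k => (trm_meas l p n k).ennreal_ofReal)).ennreal_toReal
  have hGm_eq : ∀ n : ℕ, ∀ t ∈ Ioi (0:ℝ), (∑' k : ℕ, trm l p n k t) = Gm n t := by
    intro n t ht
    have hnn : ∀ k, 0 ≤ trm l p n k t := fun k => trm_nonneg hp0 hp1 n k (mul_pos hl ht)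
    rw [hGm_def]
    simp only
    rw [← ENNReal.ofReal_tsum_of_nonneg hnn (hSk n t ht),
      ENNReal.toReal_ofReal (tsum_nonneg hnn)]
  -- the functions to be integrated
  set F : ℕ → ℝ → ℝ := fun n t => s ^ n * (exp (-t) * ∑' k : ℕ, trm l p n k t) with hF_def
  have hF_nonneg : ∀ n : ℕ, ∀ t ∈ Ioi (0:ℝ), 0 ≤ F n t := by
    intro n t ht
    have hnn : ∀ k, 0 ≤ trm l p n k t := fun k => trm_nonneg hp0 hp1 n k (mul_pos hl ht)
    have : 0 ≤ ∑' k : ℕ, trm l p n k t := tsum_nonneg hnn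
    have := (exp_pos (-t)).le
    rw [hF_def]
    positivity
  have hF_meas : ∀ n : ℕ, AEStronglyMeasurable (F n) (volume.restrict (Ioi 0)) := by
    intro n
    have hM : Measurable (fun t : ℝ => s ^ n * (exp (-t) * Gm n t)) := by
      exact Measurable.const_mul ((measurable_exp.comp measurable_neg).mul (hGm_meas n)) _
    refine (hM.aestronglyMeasurable).congr ?_
    filter_upwards [ae_restrict_mem measurableSet_Ioi] with t ht
    simp only [hF_def]
    rw [← hGm_eq n t ht]
  -- summability in n for fixed t > 0
  have hsum_n : ∀ t ∈ Ioi (0:ℝ), Summable (fun n => F n t) := by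
    intro t ht
    have h1 := (hPA t ht).1.prod_symm
    have h2 := (summable_prod_of_nonneg ?_).mp h1
    · have h3 : Summable (fun n : ℕ => ∑' k : ℕ, s^n * trm l p n k t) := h2.2
      refine Summable.congr (h3.mul_left (exp (-t))) (fun n => ?_)
      rw [hF_def]
      simp only
      rw [tsum_mul_left]
      ring
    · intro q
      exact mul_nonneg (by positivity) (trm_nonneg hp0 hp1 _ _ (mul_pos hl ht))
  -- value of the sum over n for fixed t > 0
  have hsumF : ∀ t ∈ Ioi (0:ℝ), (∑' n : ℕ, F n t)
      = exp (-t) * (exp (-(l*t)) * (1-p+p*s) / (1 - (1 - exp (-(l*t))) * (1-p+p*s))) := by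
    intro t ht
    have h1 : (∑' n : ℕ, F n t) = exp (-t) * ∑' n : ℕ, (s^n * ∑' k : ℕ, trm l p n k t) := by
      rw [← tsum_mul_left]
      refine tsum_congr (fun n => ?_)
      rw [hF_def]; simp only; ring
    rw [h1]
    have h2 : (∑' n : ℕ, (s^n * ∑' k : ℕ, trm l p n k t))
        = ∑' n : ℕ, ∑' k : ℕ, s^n * trm l p n k t := by
      refine tsum_congr (fun n => ?_)
      rw [tsum_mul_left]
    rw [h2, (hPA t ht).2]
  -- finiteness for integral_tsum
  have hfin : (∑' n : ℕ, ∫⁻ t in Ioi (0:ℝ), ‖F n t‖₊) ≠ ⊤ := by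
    have hstep : ∀ n : ℕ, (∫⁻ t in Ioi (0:ℝ), ‖F n t‖₊)
        = ∫⁻ t in Ioi (0:ℝ), ENNReal.ofReal (F n t) := by
      intro n
      refine lintegral_congr_ae ?_
      filter_upwards [ae_restrict_mem measurableSet_Ioi] with t ht
      rw [← enorm_eq_nnnorm, ← ofReal_norm, Real.norm_eq_abs, abs_of_nonneg (hF_nonneg n t ht)]
    have hmeas2 : ∀ n : ℕ, AEMeasurable (fun t => ENNReal.ofReal (F n t))
        (volume.restrict (Ioi 0)) := fun n => (hF_meas n).aemeasurable.ennreal_ofReal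
    have hswap : (∑' n : ℕ, ∫⁻ t in Ioi (0:ℝ), ENNReal.ofReal (F n t))
        = ∫⁻ t in Ioi (0:ℝ), ∑' n : ℕ, ENNReal.ofReal (F n t) := (lintegral_tsum hmeas2).symm
    have hbound : (∫⁻ t in Ioi (0:ℝ), ∑' n : ℕ, ENNReal.ofReal (F n t))
        ≤ ∫⁻ t in Ioi (0:ℝ), ENNReal.ofReal (exp (-t) * ((1-p+p*s)/(1-(1-p+p*s)))) := by
      refine lintegral_mono_ae ?_
      filter_upwards [ae_restrict_mem measurableSet_Ioi] with t ht
      rw [← ENNReal.ofReal_tsum_of_nonneg (fun n => hF_nonneg n t ht) (hsum_n t ht)]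
      refine ENNReal.ofReal_le_ofReal ?_
      rw [hsumF t ht]
      refine mul_le_mul_of_nonneg_left ?_ (exp_pos (-t)).le
      have ha1 := hale t ht
      have ha0 := hapos t
      refine div_le_div₀ (by positivity) (by nlinarith) (by linarith) (by nlinarith)
    have hfin2 : (∫⁻ t in Ioi (0:ℝ), ENNReal.ofReal
        (exp (-t) * ((1-p+p*s)/(1-(1-p+p*s))))) ≠ ⊤ := by
      have hint : IntegrableOn (fun t : ℝ => exp (-t) * ((1-p+p*s)/(1-(1-p+p*s)))) (Ioi 0) := by
        simpa [neg_one_mul, IntegrableOn] using (exp_neg_integrableOn_Ioi 0 one_pos).mul_const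
          ((1-p+p*s)/(1-(1-p+p*s)))
      rw [← MeasureTheory.ofReal_integral_eq_lintegral_ofReal hint ?_]
      · exact ENNReal.ofReal_ne_top
      · filter_upwards [ae_restrict_mem measurableSet_Ioi] with t ht
        have : (0:ℝ) < (1-p+p*s)/(1-(1-p+p*s)) := by
          apply div_pos hx0; linarith
        positivity
    have hlt : (∑' n : ℕ, ∫⁻ t in Ioi (0:ℝ), ‖F n t‖₊) < ⊤ :=
      calc (∑' n : ℕ, ∫⁻ t in Ioi (0:ℝ), ‖F n t‖₊)
          = ∑' n : ℕ, ∫⁻ t in Ioi (0:ℝ), ENNReal.ofReal (F n t) := tsum_congr hstep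
        _ = ∫⁻ t in Ioi (0:ℝ), ∑' n : ℕ, ENNReal.ofReal (F n t) := hswap
        _ ≤ _ := hbound
        _ < ⊤ := lt_top_iff_ne_top.mpr hfin2
    exact hlt.ne
  -- swap sum and integral
  have hswap := MeasureTheory.integral_tsum hF_meas hfin
  have hLHS : (∑' n : ℕ, s ^ n * ∫ t in Ioi (0:ℝ), exp (-t) * ∑' k : ℕ, trm l p n k t)
      = ∑' n : ℕ, ∫ t in Ioi (0:ℝ), F n t := by
    refine tsum_congr (fun n => ?_)
    rw [hF_def]
    simp only
    rw [integral_const_mul]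
  rw [hLHS, ← hswap]
  have hmid : (∫ t in Ioi (0:ℝ), ∑' n : ℕ, F n t)
      = ∫ t in Ioi (0:ℝ), exp (-t) *
          (exp (-(l*t)) * (1-p+p*s) / (1 - (1 - exp (-(l*t))) * (1-p+p*s))) :=
    setIntegral_congr_fun measurableSet_Ioi (fun t ht => hsumF t ht)
  rw [hmid]
  exact intC hl hx0 hx1

theorem yule_binomial_extinction_condition (l p : ℝ) (hl : 0 < l)
    (hp0 : 0 < p) (hp1 : p ≤ 1) (d : ℕ) (hd : 1 ≤ d) :
    (∑' n : ℕ, ((d : ℝ) / (d + 1)) ^ n *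
        ∫ t in Set.Ioi (0:ℝ), Real.exp (-t) *
          ∑' k : ℕ, (if max n 1 ≤ k then
            Real.exp (-(l * t)) * (1 - Real.exp (-(l * t))) ^ (k - 1) *
              (k.choose n : ℝ) * p ^ n * (1 - p) ^ (k - n)
            else 0)
        ≥ (d : ℝ) / (d + 1))
      ↔ ∑' k : ℕ, (Nat.factorial k : ℝ) * (((d : ℝ) + 1 - p) / (d + 1)) ^ k /
          (ascPochhammer ℝ k).eval (2 + 1 / l)
        ≥ (d : ℝ) * (l + 1) / ((d : ℝ) + 1 - p) := by
  have hd1 : (1:ℝ) ≤ (d:ℝ) := by exact_mod_cast hd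
  have hdpos : (0:ℝ) < (d:ℝ) := by linarith
  have hd1pos : (0:ℝ) < (d:ℝ) + 1 := by linarith
  have hs0 : 0 < (d:ℝ) / ((d:ℝ) + 1) := div_pos hdpos hd1pos
  have hs1 : (d:ℝ) / ((d:ℝ) + 1) < 1 := by
    rw [div_lt_one hd1pos]; linarith
  have hmain := mainEq hl hp0 hp1 hs0 hs1
  have hx : 1 - p + p * ((d:ℝ) / ((d:ℝ) + 1)) = ((d:ℝ) + 1 - p) / ((d:ℝ) + 1) := by
    field_simp; ring
  rw [hx] at hmain
  have hdp : (0:ℝ) < (d:ℝ) + 1 - p := by linarith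
  have hc : (0:ℝ) < (((d:ℝ) + 1 - p) / ((d:ℝ) + 1)) / (l + 1) := by
    apply div_pos (div_pos hdp hd1pos); linarith
  rw [hmain]
  have hkey : (d:ℝ) * (l + 1) / ((d:ℝ) + 1 - p)
      = ((d:ℝ) / ((d:ℝ) + 1)) / ((((d:ℝ) + 1 - p) / ((d:ℝ) + 1)) / (l + 1)) := by
    rw [div_div_eq_mul_div, div_div_eq_mul_div]
    rw [div_eq_div_iff (by positivity) (by positivity)]
    field_simp
    try ring
  rw [ge_iff_le, ge_iff_le, hkey, div_le_iff₀ hc, mul_comm]
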